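/- For natural numbers m ≥ ℓ, ∏_{j=m-ℓ}^{2m-ℓ-1} (q^j + 1) = Σ_{k=0}^{m-ℓ} q^{(m-k-ℓ)(m-k-ℓ-1)} · binom(m, k+ℓ)_q · ∏_{j=m-k-ℓ}^{m-1} (q^j + 1) · ∏_{j=k+1}^{m-ℓ} (q^j - 1). -/

import Mathlib

/-- The Gaussian (q-)binomial coefficient `binom(a,b)_q = ∏_{i=0}^{b-1} (q^{a-i}-1)/(q^{i+1}-1)`. -/
noncomputable def qbinom (q : ℚ) (a b : ℕ) : ℚ :=
  ∏ i ∈ Finset.range b, (q ^ (a - i) - 1) / (q ^ (i + 1) - 1)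

open Finset

namespace QAux

/-- division-free Gaussian binomial via Pascal recursion -/
def gb (q : ℚ) : ℕ → ℕ → ℚ
  | _, 0 => 1
  | 0, _ + 1 => 0
  | a + 1, b + 1 => gb q a b + q ^ (b + 1) * gb q a (b + 1)

lemma gb_zero (q : ℚ) : ∀ a b : ℕ, a < b → gb q a b = 0
  | _, 0, h => absurd h (Nat.not_lt_zero _)
  | 0, _ + 1, _ => rfl
  | a + 1, b + 1, h => by
    rw [gb, gb_zero q a b (by omega), gb_zero q a (b + 1) (by omega)]
    ring

variable {q : ℚ} (hq : 2 ≤ q)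

/-- numerator -/
noncomputable def Num (q : ℚ) (a b : ℕ) : ℚ := ∏ i ∈ range b, (q ^ (a - i) - 1)

/-- q-factorial -/
noncomputable def fac (q : ℚ) (b : ℕ) : ℚ := ∏ i ∈ range b, (q ^ (i + 1) - 1)

include hq

lemma pow_sub_one_ne (j : ℕ) (hj : 1 ≤ j) : q ^ j - 1 ≠ 0 := by
  have h1 : (1:ℚ) < q := lt_of_lt_of_le one_lt_two hq
  have : (1:ℚ) < q ^ j := one_lt_pow₀ h1 (by omega)
  intro h; nlinarith

lemma fac_ne_zero (b : ℕ) : fac q b ≠ 0 := by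
  refine Finset.prod_ne_zero_iff.2 fun i _ => ?_
  exact pow_sub_one_ne hq (i + 1) (by omega)

lemma qbinom_eq_div (a b : ℕ) : qbinom q a b = Num q a b / fac q b := by
  rw [qbinom, Num, fac, Finset.prod_div_distrib]

lemma num_zero_of_lt {a b : ℕ} (h : a < b) : Num q a b = 0 := by
  refine Finset.prod_eq_zero (i := a) (mem_range.2 h) ?_
  simp

lemma num_succ_succ (a b : ℕ) : Num q (a + 1) (b + 1) = (q ^ (a + 1) - 1) * Num q a b := by
  rw [Num, Finset.prod_range_succ', Num]
  simp only [Nat.succ_sub_succ_eq_sub, Nat.sub_zero]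
  ring

lemma num_succ (a b : ℕ) : Num q a (b + 1) = Num q a b * (q ^ (a - b) - 1) := by
  rw [Num, Finset.prod_range_succ, Num]

lemma fac_succ (b : ℕ) : fac q (b + 1) = fac q b * (q ^ (b + 1) - 1) := by
  rw [fac, Finset.prod_range_succ, fac]

lemma qbinom_pascal (a b : ℕ) :
    qbinom q (a + 1) (b + 1) = qbinom q a b + q ^ (b + 1) * qbinom q a (b + 1) := by
  have hfb := fac_ne_zero hq b
  have hfb1 := fac_ne_zero hq (b + 1)
  rw [qbinom_eq_div hq, qbinom_eq_div hq, qbinom_eq_div hq, num_succ_succ hq,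
    num_succ hq, fac_succ hq]
  rcases le_or_gt b a with hba | hab
  · have hb1 : q ^ (b + 1) * q ^ (a - b) = q ^ (a + 1) := by
      rw [← pow_add]; congr 1; omega
    have key : (q ^ (a+1) - 1) = (q ^ (b+1) - 1) + q ^ (b+1) * (q ^ (a-b) - 1) := by
      rw [mul_sub, hb1]; ring
    have hne := pow_sub_one_ne hq (b+1) (by omega)
    rw [key]
    field_simp
  · rw [num_zero_of_lt hq hab]
    simp


lemma qbinom_zero (a : ℕ) : qbinom q a 0 = 1 := by
  simp [qbinom]

lemma qbinom_eq_gb : ∀ a b : ℕ, qbinom q a b = gb q a b := by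
  intro a
  induction a with
  | zero =>
    intro b
    cases b with
    | zero => simp [qbinom, gb]
    | succ b =>
      rw [gb, qbinom_eq_div hq, num_zero_of_lt hq (by omega), zero_div]
  | succ a ih =>
    intro b
    cases b with
    | zero => simp [qbinom, gb]
    | succ b => rw [qbinom_pascal hq, gb, ih, ih]

lemma num_mul_fac {a b : ℕ} (h : b ≤ a) : Num q a b * fac q (a - b) = fac q a := by
  have ha : a = (a - b) + b := by omega
  have h2 : fac q a = fac q (a - b) * ∏ j ∈ range b, (q ^ ((a - b) + j + 1) - 1) := by
    rw [fac]; nth_rewrite 1 [ha]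
    rw [Finset.prod_range_add]; rfl
  have h3 : Num q a b = ∏ j ∈ range b, (q ^ ((a - b) + j + 1) - 1) := by
    rw [Num, ← Finset.prod_range_reflect]
    refine Finset.prod_congr rfl fun j hj => ?_
    have hj' : j < b := mem_range.1 hj
    congr 2
    omega
  rw [h3, h2]; ring

lemma qbinom_closed {a b : ℕ} (h : b ≤ a) :
    qbinom q a b = fac q a / (fac q b * fac q (a - b)) := by
  rw [qbinom_eq_div hq, ← num_mul_fac hq h]
  rw [mul_comm (fac q b) _, ← div_div]
  rw [mul_div_assoc, div_self (fac_ne_zero hq _), mul_one]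

lemma qbinom_symm {a b : ℕ} (h : b ≤ a) : qbinom q a (a - b) = qbinom q a b := by
  rw [qbinom_closed hq (Nat.sub_le a b), qbinom_closed hq h]
  rw [Nat.sub_sub_self h, mul_comm]

lemma gb_trinomial {i s m : ℕ} (h : i + s ≤ m) :
    gb q m (i + s) * gb q (i + s) i = gb q m i * gb q (m - i) s := by
  rw [← qbinom_eq_gb hq, ← qbinom_eq_gb hq, ← qbinom_eq_gb hq, ← qbinom_eq_gb hq]
  rw [qbinom_closed hq h, qbinom_closed hq (Nat.le_add_right i s),
    qbinom_closed hq (le_trans (Nat.le_add_right i s) h),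
    qbinom_closed hq (by omega : s ≤ m - i)]
  have e1 : i + s - i = s := by omega
  have e2 : m - i - s = m - (i + s) := by omega
  rw [e1, e2]
  have n1 := fac_ne_zero hq i
  have n2 := fac_ne_zero hq s
  have n3 := fac_ne_zero hq (m - (i + s))
  have n4 := fac_ne_zero hq (i + s)
  have n5 := fac_ne_zero hq (m - i)
  field_simp


/-- q-analog of Newton expansion: x^r = Σ gb(r,i) ∏_{j<i}(x - q^j) -/
lemma vander (x : ℚ) : ∀ r : ℕ,
    x ^ r = ∑ i ∈ range (r + 1), gb q r i * ∏ j ∈ range i, (x - q ^ j) := by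
  intro r
  induction r with
  | zero => simp [gb]
  | succ r ih =>
    have step : x ^ (r + 1) =
        ∑ i ∈ range (r + 1), gb q r i * (∏ j ∈ range (i+1), (x - q ^ j))
        + ∑ i ∈ range (r + 1), q ^ i * (gb q r i * ∏ j ∈ range i, (x - q ^ j)) := by
      rw [← Finset.sum_add_distrib]
      rw [pow_succ, ih, Finset.sum_mul]
      refine Finset.sum_congr rfl fun i _ => ?_
      rw [Finset.prod_range_succ]
      ring
    rw [step]
    rw [Finset.sum_range_succ' (fun i => gb q (r+1) i * ∏ j ∈ range i, (x - q ^ j)) (r+1)]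
    have h0 : gb q (r+1) 0 * ∏ j ∈ range 0, (x - q ^ j) = 1 := by simp [gb]
    rw [h0]
    have h1 : ∑ i ∈ range (r + 1), gb q (r+1) (i+1) * ∏ j ∈ range (i+1), (x - q ^ j)
        = ∑ i ∈ range (r + 1), (gb q r i + q ^ (i+1) * gb q r (i+1)) * ∏ j ∈ range (i+1), (x - q ^ j) := by
      refine Finset.sum_congr rfl fun i _ => ?_
      rw [gb]
    rw [h1]
    have h2 : ∑ i ∈ range (r + 1), q ^ i * (gb q r i * ∏ j ∈ range i, (x - q ^ j))
        = 1 + ∑ i ∈ range r, q ^ (i+1) * (gb q r (i+1) * ∏ j ∈ range (i+1), (x - q ^ j)) := by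
      rw [Finset.sum_range_succ' (fun i => q ^ i * (gb q r i * ∏ j ∈ range i, (x - q ^ j))) r]
      simp [gb]
      ring
    rw [h2]
    have h3 : ∑ i ∈ range (r+1), q ^ (i+1) * (gb q r (i+1) * ∏ j ∈ range (i+1), (x - q ^ j))
        = ∑ i ∈ range r, q ^ (i+1) * (gb q r (i+1) * ∏ j ∈ range (i+1), (x - q ^ j)) := by
      rw [Finset.sum_range_succ, gb_zero q r (r+1) (by omega)]
      ring
    rw [← h3]
    have h4 : ∑ i ∈ range (r + 1), (gb q r i + q ^ (i+1) * gb q r (i+1)) * ∏ j ∈ range (i+1), (x - q ^ j)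
        = ∑ i ∈ range (r + 1), (gb q r i * ∏ j ∈ range (i+1), (x - q ^ j)
            + q ^ (i+1) * (gb q r (i+1) * ∏ j ∈ range (i+1), (x - q ^ j))) := by
      refine Finset.sum_congr rfl fun i _ => by ring
    rw [h4, Finset.sum_add_distrib]
    ring

/-- Rothe's q-binomial theorem, division-free form -/
lemma rothe : ∀ (M : ℕ) (x : ℚ),
    ∏ t ∈ range M, (1 + x * q ^ t) = ∑ i ∈ range (M + 1), gb q M i * ∏ j ∈ range i, (x * q ^ j) := by
  intro M
  induction M with
  | zero => intro x; simp [gb]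
  | succ M ih =>
    intro x
    have step : ∏ t ∈ range (M + 1), (1 + x * q ^ t)
        = (∏ t ∈ range M, (1 + (x * q) * q ^ t)) * (1 + x) := by
      rw [Finset.prod_range_succ' (fun t => 1 + x * q ^ t) M]
      simp only [pow_succ, pow_zero, mul_one]
      congr 1
      refine Finset.prod_congr rfl fun t _ => ?_
      ring
    rw [step, ih]
    have hS : ∀ i : ℕ, (∏ j ∈ range i, ((x * q) * q ^ j)) = q ^ i * ∏ j ∈ range i, (x * q ^ j) := by
      intro i
      rw [show (q:ℚ) ^ i = ∏ _j ∈ range i, q from by rw [Finset.prod_const]; simp, ← Finset.prod_mul_distrib]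
      refine Finset.prod_congr rfl fun j _ => by ring
    have expand : (∑ i ∈ range (M + 1), gb q M i * ∏ j ∈ range i, ((x*q) * q ^ j)) * (1 + x)
        = ∑ i ∈ range (M + 1), q ^ i * (gb q M i * ∏ j ∈ range i, (x * q ^ j))
        + ∑ i ∈ range (M + 1), gb q M i * ∏ j ∈ range (i+1), (x * q ^ j) := by
      rw [← Finset.sum_add_distrib, Finset.sum_mul]
      refine Finset.sum_congr rfl fun i _ => ?_
      rw [hS i, Finset.prod_range_succ]
      ring
    rw [expand]
    rw [Finset.sum_range_succ' (fun i => gb q (M+1) i * ∏ j ∈ range i, (x * q ^ j)) (M+1)]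
    have h0 : gb q (M+1) 0 * ∏ j ∈ range 0, (x * q ^ j) = 1 := by simp [gb]
    rw [h0]
    have h1 : ∑ i ∈ range (M + 1), gb q (M+1) (i+1) * ∏ j ∈ range (i+1), (x * q ^ j)
        = ∑ i ∈ range (M + 1), (gb q M i + q ^ (i+1) * gb q M (i+1)) * ∏ j ∈ range (i+1), (x * q ^ j) := by
      refine Finset.sum_congr rfl fun i _ => ?_
      rw [gb]
    rw [h1]
    have h2 : ∑ i ∈ range (M + 1), q ^ i * (gb q M i * ∏ j ∈ range i, (x * q ^ j))
        = 1 + ∑ i ∈ range M, q ^ (i+1) * (gb q M (i+1) * ∏ j ∈ range (i+1), (x * q ^ j)) := by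
      rw [Finset.sum_range_succ' (fun i => q ^ i * (gb q M i * ∏ j ∈ range i, (x * q ^ j))) M]
      simp [gb]
      ring
    rw [h2]
    have h3 : ∑ i ∈ range (M+1), q ^ (i+1) * (gb q M (i+1) * ∏ j ∈ range (i+1), (x * q ^ j))
        = ∑ i ∈ range M, q ^ (i+1) * (gb q M (i+1) * ∏ j ∈ range (i+1), (x * q ^ j)) := by
      rw [Finset.sum_range_succ, gb_zero q M (M+1) (by omega)]
      ring
    rw [← h3]
    have h4 : ∑ i ∈ range (M + 1), (gb q M i + q ^ (i+1) * gb q M (i+1)) * ∏ j ∈ range (i+1), (x * q ^ j)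
        = ∑ i ∈ range (M + 1), (gb q M i * ∏ j ∈ range (i+1), (x * q ^ j)
            + q ^ (i+1) * (gb q M (i+1) * ∏ j ∈ range (i+1), (x * q ^ j))) := by
      refine Finset.sum_congr rfl fun i _ => by ring
    rw [h4, Finset.sum_add_distrib]
    ring

omit hq in
lemma tri_swap (f : ℕ → ℕ → ℚ) : ∀ m : ℕ,
    ∑ r ∈ range (m + 1), ∑ i ∈ range (r + 1), f r i
    = ∑ i ∈ range (m + 1), ∑ s ∈ range (m + 1 - i), f (i + s) i := by
  intro m
  induction m with
  | zero => simp
  | succ m ih =>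
    rw [Finset.sum_range_succ, ih]
    rw [Finset.sum_range_succ (fun i => ∑ s ∈ range (m + 2 - i), f (i + s) i) (m+1)]
    have hlast : ∑ s ∈ range (m + 2 - (m+1)), f ((m+1) + s) (m+1) = f (m+1) (m+1) := by
      rw [show m + 2 - (m+1) = 1 from by omega]
      simp
    rw [hlast]
    have hmain : ∑ i ∈ range (m + 1), ∑ s ∈ range (m + 2 - i), f (i + s) i
        = ∑ i ∈ range (m + 1), (∑ s ∈ range (m + 1 - i), f (i + s) i + f (m+1) i) := by
      refine Finset.sum_congr rfl fun i hi => ?_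
      have hi' : i < m + 1 := mem_range.1 hi
      rw [show m + 2 - i = (m + 1 - i) + 1 from by omega, Finset.sum_range_succ]
      congr 2
      omega
    rw [hmain, Finset.sum_add_distrib]
    rw [Finset.sum_range_succ (fun i => f (m+1) i) (m+1)]
    ring


lemma inner_sum {m i : ℕ} (him : i ≤ m) :
    ∑ s ∈ range (m + 1 - i), gb q m (i + s) * (∏ j ∈ range (i + s), q ^ j) * gb q (i + s) i
    = gb q m i * (∏ j ∈ range i, q ^ j) * ∏ t ∈ range (m - i), (1 + q ^ i * q ^ t) := by
  have hrange : m + 1 - i = (m - i) + 1 := by omega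
  have step1 : ∀ s ∈ range (m + 1 - i),
      gb q m (i + s) * (∏ j ∈ range (i + s), q ^ j) * gb q (i + s) i
      = gb q m i * (∏ j ∈ range i, q ^ j) * (gb q (m - i) s * ∏ j ∈ range s, (q ^ i * q ^ j)) := by
    intro s hs
    have hs' : s < m + 1 - i := mem_range.1 hs
    have hism : i + s ≤ m := by omega
    have hT : (∏ j ∈ range (i + s), q ^ j)
        = (∏ j ∈ range i, q ^ j) * ∏ j ∈ range s, (q ^ i * q ^ j) := by
      rw [Finset.prod_range_add]
      congr 1
      refine Finset.prod_congr rfl fun j _ => ?_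
      rw [pow_add]
    have htri := gb_trinomial hq hism
    calc gb q m (i + s) * (∏ j ∈ range (i + s), q ^ j) * gb q (i + s) i
        = (gb q m (i + s) * gb q (i + s) i) * ∏ j ∈ range (i + s), q ^ j := by ring
      _ = (gb q m i * gb q (m - i) s) * ((∏ j ∈ range i, q ^ j) * ∏ j ∈ range s, (q ^ i * q ^ j)) := by
          rw [htri, hT]
      _ = gb q m i * (∏ j ∈ range i, q ^ j) * (gb q (m - i) s * ∏ j ∈ range s, (q ^ i * q ^ j)) := by
          ring
  rw [Finset.sum_congr rfl step1, ← Finset.mul_sum, hrange, ← rothe hq (m - i) (q ^ i)]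

end QAux

open QAux

theorem stmt6 (q : ℚ) (hq : 2 ≤ q) (m ℓ : ℕ) (hlm : ℓ ≤ m) :
    ∏ j ∈ Finset.Icc (m - ℓ) (2 * m - ℓ - 1), (q ^ j + 1) =
      ∑ k ∈ Finset.range (m - ℓ + 1),
        q ^ ((m - k - ℓ) * (m - k - ℓ - 1)) * qbinom q m (k + ℓ) *
          (∏ j ∈ Finset.Icc (m - k - ℓ) (m - 1), (q ^ j + 1)) *
          ∏ j ∈ Finset.Icc (k + 1) (m - ℓ), (q ^ j - 1) := by
  rcases Nat.eq_zero_or_pos m with rfl | hm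
  · obtain rfl : ℓ = 0 := by omega
    norm_num [qbinom]
  -- notation
  set n := m - ℓ with hn
  -- the left-hand side, expanded
  have L : ∏ j ∈ Finset.Icc n (2 * m - ℓ - 1), (q ^ j + 1)
      = ∑ i ∈ range (m + 1),
          gb q m i * (∏ j ∈ range i, q ^ j) * (∏ t ∈ range (m - i), (1 + q ^ i * q ^ t)) *
            ∏ j ∈ range i, (q ^ n - q ^ j) := by
    have e1 : 2 * m - ℓ - 1 = n + m - 1 := by omega
    have e2 : Finset.Icc n (n + m - 1) = Finset.Ico n (n + m) := by
      rw [← Finset.Ico_add_one_right_eq_Icc, show n + m - 1 + 1 = n + m from by omega]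
    calc ∏ j ∈ Finset.Icc n (2 * m - ℓ - 1), (q ^ j + 1)
        = ∏ j ∈ Finset.Ico n (n + m), (q ^ j + 1) := by rw [e1, e2]
      _ = ∏ t ∈ range m, (q ^ (n + t) + 1) := by
          rw [Finset.prod_Ico_eq_prod_range, show n + m - n = m from by omega]
      _ = ∏ t ∈ range m, (1 + q ^ n * q ^ t) := by
          refine Finset.prod_congr rfl fun t _ => ?_
          rw [pow_add]; ring
      _ = ∑ r ∈ range (m + 1), gb q m r * ∏ j ∈ range r, (q ^ n * q ^ j) := rothe hq m (q ^ n)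
      _ = ∑ r ∈ range (m + 1), ∑ i ∈ range (r + 1),
            gb q m r * (∏ j ∈ range r, q ^ j) * gb q r i * ∏ j ∈ range i, (q ^ n - q ^ j) := by
          refine Finset.sum_congr rfl fun r _ => ?_
          have hp : (∏ j ∈ range r, (q ^ n * q ^ j))
              = (q ^ n) ^ r * ∏ j ∈ range r, q ^ j := by
            rw [Finset.prod_mul_distrib, Finset.prod_const, Finset.card_range]
          rw [hp, vander hq (q ^ n) r, Finset.sum_mul, Finset.mul_sum]
          refine Finset.sum_congr rfl fun i _ => ?_
          ring
      _ = ∑ i ∈ range (m + 1), ∑ s ∈ range (m + 1 - i),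
            gb q m (i + s) * (∏ j ∈ range (i + s), q ^ j) * gb q (i + s) i *
              ∏ j ∈ range i, (q ^ n - q ^ j) :=
          tri_swap (fun r i => gb q m r * (∏ j ∈ range r, q ^ j) * gb q r i *
            ∏ j ∈ range i, (q ^ n - q ^ j)) m
      _ = ∑ i ∈ range (m + 1),
            gb q m i * (∏ j ∈ range i, q ^ j) * (∏ t ∈ range (m - i), (1 + q ^ i * q ^ t)) *
              ∏ j ∈ range i, (q ^ n - q ^ j) := by
          refine Finset.sum_congr rfl fun i hi => ?_
          have him : i ≤ m := by have := mem_range.1 hi; omega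
          rw [show (∑ s ∈ range (m + 1 - i),
              gb q m (i + s) * (∏ j ∈ range (i + s), q ^ j) * gb q (i + s) i *
                ∏ j ∈ range i, (q ^ n - q ^ j))
            = (∑ s ∈ range (m + 1 - i),
              gb q m (i + s) * (∏ j ∈ range (i + s), q ^ j) * gb q (i + s) i) *
                ∏ j ∈ range i, (q ^ n - q ^ j) from by rw [Finset.sum_mul]]
          rw [inner_sum hq him]
  rw [L]
  -- shrink the sum: terms with i > n vanish
  have shrink : ∑ i ∈ range (m + 1),
      gb q m i * (∏ j ∈ range i, q ^ j) * (∏ t ∈ range (m - i), (1 + q ^ i * q ^ t)) *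
        ∏ j ∈ range i, (q ^ n - q ^ j)
      = ∑ i ∈ range (n + 1),
      gb q m i * (∏ j ∈ range i, q ^ j) * (∏ t ∈ range (m - i), (1 + q ^ i * q ^ t)) *
        ∏ j ∈ range i, (q ^ n - q ^ j) := by
    refine (Finset.sum_subset ?_ ?_).symm
    · intro x hx
      have := mem_range.1 hx
      exact mem_range.2 (by omega)
    · intro i hi hni
      have h1 : n < i := by
        by_contra h
        exact hni (mem_range.2 (by omega))
      have : (∏ j ∈ range i, (q ^ n - q ^ j)) = 0 :=
        Finset.prod_eq_zero (mem_range.2 h1) (by rw [sub_self])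
      rw [this, mul_zero]
  rw [shrink]
  -- rewrite RHS via reflection k ↦ n - k
  rw [← Finset.sum_range_reflect (fun k =>
      q ^ ((m - k - ℓ) * (m - k - ℓ - 1)) * qbinom q m (k + ℓ) *
        (∏ j ∈ Finset.Icc (m - k - ℓ) (m - 1), (q ^ j + 1)) *
        ∏ j ∈ Finset.Icc (k + 1) (m - ℓ), (q ^ j - 1)) (n + 1)]
  -- now compare termwise
  refine Finset.sum_congr rfl fun i hi => ?_
  have hin : i ≤ n := by have := mem_range.1 hi; omega
  have him : i ≤ m := by omega
  have e1 : m - (n + 1 - 1 - i) - ℓ = i := by omega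
  have e2 : (n + 1 - 1 - i) + ℓ = m - i := by omega
  have e3 : (n + 1 - 1 - i) + 1 = n - i + 1 := by omega
  rw [e1, e2, e3]
  -- identify the pieces
  have hA : ∏ j ∈ Finset.Icc i (m - 1), (q ^ j + 1)
      = ∏ t ∈ range (m - i), (1 + q ^ i * q ^ t) := by
    have : Finset.Icc i (m - 1) = Finset.Ico i m := by
      rw [← Finset.Ico_add_one_right_eq_Icc]
      congr 1
      omega
    rw [this, Finset.prod_Ico_eq_prod_range]
    refine Finset.prod_congr rfl fun t _ => ?_
    rw [pow_add]; ring
  have hB : ∏ j ∈ Finset.Icc (n - i + 1) n, (q ^ j - 1)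
      = ∏ t ∈ range i, (q ^ (n - t) - 1) := by
    have : Finset.Icc (n - i + 1) n = Finset.Ico (n - i + 1) (n + 1) := by
      rw [← Finset.Ico_add_one_right_eq_Icc]
    rw [this, Finset.prod_Ico_eq_prod_range]
    rw [show n + 1 - (n - i + 1) = i from by omega]
    rw [← Finset.prod_range_reflect (fun t => (q ^ (n - t) - 1)) i]
    refine Finset.prod_congr rfl fun t ht => ?_
    have ht' : t < i := mem_range.1 ht
    congr 2
    omega
  have hPi : (∏ j ∈ range i, (q ^ n - q ^ j))
      = (∏ j ∈ range i, q ^ j) * ∏ t ∈ range i, (q ^ (n - t) - 1) := by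
    rw [← Finset.prod_mul_distrib]
    refine Finset.prod_congr rfl fun j hj => ?_
    have hj' : j < i := mem_range.1 hj
    rw [mul_sub, mul_one, ← pow_add]
    congr 2
    omega
  have hT2 : q ^ (i * (i - 1)) = (∏ j ∈ range i, q ^ j) * (∏ j ∈ range i, q ^ j) := by
    rw [Finset.prod_pow_eq_pow_sum, ← pow_add, ← two_mul, mul_comm 2, Finset.sum_range_id_mul_two]
  have hsym : qbinom q m (m - i) = gb q m i := by
    rw [qbinom_symm hq him, qbinom_eq_gb hq]
  rw [hA, hB, hPi, hT2, hsym]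
  ring
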